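/- Let p ≥ 2 and let x₁, …, x_p be vectors in ℝⁿ, each of norm 1, such that |⟨xᵢ, x₁⟩| > √2/2 for every i = 2, …, p. Then there exist signs ε₁, …, ε_p ∈ {1, −1} such that ⟨εᵢ xᵢ, ε_j x_j⟩ > 0 for every pair i ≠ j; that is, some choice of exactly one element from each pair {x_j, −x_j} yields a set of vectors in which every pair has positive inner product (an all-positive-correlations arrangement). -/

import Mathlib

/-- If `p ≥ 2` unit vectors in `ℝⁿ` each have `|⟨xᵢ, x₁⟩| > √2/2`
(with `x₁ = x ⟨0,_⟩`), then there is a choice of signs `εᵢ ∈ {1, -1}` making all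
pairwise inner products of the `εᵢ • xᵢ` positive (an APC arrangement). -/
theorem apc_arrangement_exists (n p : ℕ) (hp : 2 ≤ p)
    (x : Fin p → EuclideanSpace ℝ (Fin n))
    (hnorm : ∀ i, ‖x i‖ = 1)
    (hcorr : ∀ i : Fin p, i ≠ ⟨0, by omega⟩ →
      |(inner ℝ (x i) (x ⟨0, by omega⟩) : ℝ)| > Real.sqrt 2 / 2) :
    ∃ ε : Fin p → ℝ, (∀ i, ε i = 1 ∨ ε i = -1) ∧
      ∀ i j : Fin p, i ≠ j → (0 : ℝ) < inner ℝ (ε i • x i) (ε j • x j) := by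
  have hpos : 0 < p := by omega
  set e : EuclideanSpace ℝ (Fin n) := x ⟨0, hpos⟩ with he
  set a : Fin p → ℝ := fun i => inner ℝ (x i) e with ha
  set ε : Fin p → ℝ := fun i => if 0 ≤ a i then 1 else -1 with hε
  have hee : (inner ℝ e e : ℝ) = 1 := by
    rw [real_inner_self_eq_norm_sq, hnorm]; norm_num
  have hεval : ∀ i, ε i = 1 ∨ ε i = -1 := by
    intro i; simp only [hε]; split <;> simp
  have hεabs : ∀ i, |ε i| = 1 := by
    intro i; rcases hεval i with h | h <;> rw [h] <;> norm_num
  set y : Fin p → EuclideanSpace ℝ (Fin n) := fun i => ε i • x i with hy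
  have hynorm : ∀ i, ‖y i‖ = 1 := by
    intro i; rw [hy]; simp only [norm_smul, Real.norm_eq_abs, hεabs, hnorm, one_mul]
  set b : Fin p → ℝ := fun i => inner ℝ (y i) e with hb
  have hbabs : ∀ i, b i = |a i| := by
    intro i
    simp only [hb, hy, real_inner_smul_left, hε]
    split <;> rename_i h
    · rw [abs_of_nonneg h]; ring
    · rw [abs_of_neg (lt_of_not_ge h)]; ring
  have hs2 : Real.sqrt 2 / 2 < 1 := by
    nlinarith [Real.sq_sqrt (by norm_num : (2:ℝ) ≥ 0), Real.sqrt_nonneg 2]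
  have hbig : ∀ i, Real.sqrt 2 / 2 < b i := by
    intro i
    rw [hbabs]
    by_cases h : i = ⟨0, hpos⟩
    · subst h
      have : a ⟨0, hpos⟩ = 1 := by simp only [ha, ← he, hee]
      rw [this]; simpa using hs2
    · exact hcorr i h
  have hbpos : ∀ i, 0 < b i := fun i =>
    lt_of_le_of_lt (by positivity) (hbig i)
  have hbsq : ∀ i, 1 / 2 < b i ^ 2 := by
    intro i
    have h := hbig i
    nlinarith [Real.sq_sqrt (by norm_num : (2:ℝ) ≥ 0), Real.sqrt_nonneg 2, hbpos i]
  set r : Fin p → EuclideanSpace ℝ (Fin n) := fun i => y i - b i • e with hr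
  have hinner : ∀ i j, (inner ℝ (r i) (r j) : ℝ) = inner ℝ (y i) (y j) - b i * b j := by
    intro i j
    have hje : (inner ℝ e (y j) : ℝ) = b j := by rw [real_inner_comm]
    simp only [hr, inner_sub_left, inner_sub_right, real_inner_smul_left,
      real_inner_smul_right, hee, hje]
    have : (inner ℝ (y i) e : ℝ) = b i := rfl
    rw [this]; ring
  have hrnorm : ∀ i, ‖r i‖ ^ 2 = 1 - b i ^ 2 := by
    intro i
    have h := hinner i i
    rw [real_inner_self_eq_norm_sq, real_inner_self_eq_norm_sq, hynorm i] at h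
    nlinarith [h]
  have hrlt : ∀ i, ‖r i‖ < b i := by
    intro i
    nlinarith [hrnorm i, hbsq i, norm_nonneg (r i), hbpos i]
  refine ⟨ε, hεval, fun i j _ => ?_⟩
  have hcs : |(inner ℝ (r i) (r j) : ℝ)| ≤ ‖r i‖ * ‖r j‖ := abs_real_inner_le_norm _ _
  have h1 := hinner i j
  have h2 := hrlt i
  have h3 := hrlt j
  have : (0:ℝ) < inner ℝ (y i) (y j) := by
    nlinarith [abs_le.mp hcs, norm_nonneg (r i), norm_nonneg (r j), hbpos i, hbpos j]
  exact this
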